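/- Let p ≥ 2. For every f ∈ L^p(X,μ) there exists Ω ∈ S(L^p(X,μ)) such that Ω(f,f) = ‖f‖_p². Explicitly, if f ≠ 0 the form Ω(g,h) = ‖f‖_p^{2-p} ∫_X g(x)·conj(h(x))·|f(x)|^{p-2} dμ(x) belongs to S(L^p(X,μ)) and satisfies Ω(f,f) = ‖f‖_p². -/

import Mathlib

open MeasureTheory ENNReal Complex
open scoped ComplexOrder

/-- The set `S(L^p)` of sesquilinear forms on `L^p(X,μ)`: `Ω` is linear in the
first variable, conjugate-linear in the second, positive (`Ω(f,f) ≥ 0`),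
invariant (`Ω(f·φ, ψ) = Ω(φ, f̄·ψ)` for continuous `φ, ψ`), and bounded
(`|Ω(f,g)| ≤ ‖f‖_p ‖g‖_p`). -/
def IsSform {X : Type*} [MeasurableSpace X] [TopologicalSpace X]
    (μ : Measure X) (p : ℝ≥0∞)
    (Ω : Lp ℂ p μ → Lp ℂ p μ → ℂ) : Prop :=
  (∀ f g h : Lp ℂ p μ, Ω (f + g) h = Ω f h + Ω g h) ∧
  (∀ (c : ℂ) (f g : Lp ℂ p μ), Ω (c • f) g = c * Ω f g) ∧
  (∀ f g h : Lp ℂ p μ, Ω f (g + h) = Ω f g + Ω f h) ∧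
  (∀ (c : ℂ) (f g : Lp ℂ p μ), Ω f (c • g) = (starRingEnd ℂ) c * Ω f g) ∧
  (∀ f : Lp ℂ p μ, 0 ≤ Ω f f) ∧
  (∀ (f : Lp ℂ p μ) (φ ψ : C(X, ℂ)) (φL ψL fφ fstarψ : Lp ℂ p μ),
      (φL : X → ℂ) =ᵐ[μ] φ → (ψL : X → ℂ) =ᵐ[μ] ψ →
      (fφ : X → ℂ) =ᵐ[μ] (fun x => f x * φ x) →
      (fstarψ : X → ℂ) =ᵐ[μ] (fun x => (starRingEnd ℂ) (f x) * ψ x) →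
      Ω fφ ψL = Ω φL fstarψ) ∧
  (∀ f g : Lp ℂ p μ, ‖Ω f g‖ ≤ ‖f‖ * ‖g‖)

/-- The set `B^p_+`: nonnegative functions in `L^{p/(p-2)}` of norm at most one
(in `ℝ≥0∞`-arithmetic `p/(p-2) = ∞` when `p = 2`). -/
def MemBp {X : Type*} [MeasurableSpace X] (μ : Measure X) (p : ℝ≥0∞)
    (ψ : X → ℝ) : Prop :=
  MemLp ψ (p / (p - 2)) μ ∧ (0 ≤ᵐ[μ] ψ) ∧ eLpNorm ψ (p / (p - 2)) μ ≤ 1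


open Filter in
private lemma my_integral_ofReal {X : Type*} [MeasurableSpace X] (μ : Measure X) (F : X → ℝ) :
    ∫ x, ((F x : ℝ) : ℂ) ∂μ = ((∫ x, F x ∂μ : ℝ) : ℂ) := integral_ofReal

open Filter in
theorem sform_aux {X : Type*} [MeasurableSpace X] [TopologicalSpace X]
    (μ : Measure X) {p : ℝ≥0∞} (hp : 2 ≤ p) (hp' : p ≠ ∞)
    (f : Lp ℂ p μ) (hf : f ≠ 0) :
    IsSform μ p
      (fun g h : Lp ℂ p μ =>
        ((‖f‖ ^ (2 - p.toReal) : ℝ) : ℂ) *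
          ∫ x, g x * (starRingEnd ℂ) (h x) *
            ((‖f x‖ ^ (p.toReal - 2) : ℝ) : ℂ) ∂μ) ∧
    ((‖f‖ ^ (2 - p.toReal) : ℝ) : ℂ) *
        ∫ x, f x * (starRingEnd ℂ) (f x) *
          ((‖f x‖ ^ (p.toReal - 2) : ℝ) : ℂ) ∂μ = ((‖f‖ ^ 2 : ℝ) : ℂ) := by
  haveI : Fact (1 ≤ p) := ⟨le_trans (by norm_num) hp⟩
  have hp0 : p ≠ 0 := (lt_of_lt_of_le (by norm_num) hp).ne'
  have hnorm_pos : 0 < ‖f‖ := by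
    rcases (norm_nonneg f).lt_or_eq with h | h
    · exact h
    · exact absurd ((Lp.norm_eq_zero_iff (lt_of_lt_of_le (by norm_num) hp)).1 h.symm) hf
  have hμ : μ ≠ 0 := by
    rintro rfl
    rw [Lp.norm_def] at hnorm_pos
    simp at hnorm_pos
  set q : ℝ := p.toReal with hqdef
  have hq2 : (2:ℝ) ≤ q := by
    have := ENNReal.toReal_mono hp' hp; simpa using this
  have hq0 : (0:ℝ) < q := lt_of_lt_of_le two_pos hq2
  set s : ℝ := q - 2 with hsdef
  have hs : 0 ≤ s := sub_nonneg.2 hq2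
  set c : ℝ := ‖f‖ ^ (2 - q) with hcdef
  set w : X → ℝ := fun x => ‖(f : X → ℂ) x‖ ^ s with hwdef
  set W : X → ℂ := fun x => ((w x : ℝ) : ℂ) with hWdef
  set r : ℝ≥0∞ := p / ENNReal.ofReal s with hrdef
  have hc : 0 ≤ c := Real.rpow_nonneg hnorm_pos.le _
  have hN_ne_top : eLpNorm (⇑f) p μ ≠ ∞ := Lp.eLpNorm_ne_top f
  have hofs : ENNReal.ofReal s = p - 2 := by
    rw [hsdef, ENNReal.ofReal_sub _ (by norm_num)]
    simp [hqdef, ENNReal.ofReal_toReal hp']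
  have hWmeas : AEStronglyMeasurable W μ := by
    exact (Complex.continuous_ofReal.comp (Real.continuous_rpow_const hs)).comp_aestronglyMeasurable
      (Lp.aestronglyMeasurable f).norm
  have hWnorm : eLpNorm W r μ = (eLpNorm (⇑f) p μ) ^ s := by
    rcases eq_or_lt_of_le hs with hs0 | hs0
    · have hW1 : W = fun _ => (1:ℂ) := by
        funext x; simp [hWdef, hwdef, ← hs0]
      have hr1 : r = ∞ := by
        rw [hrdef, ← hs0]
        simp [ENNReal.div_zero hp0]
      rw [hW1, hr1, ← hs0, ENNReal.rpow_zero, eLpNorm_exponent_top, eLpNormEssSup_const _ hμ]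
      simp
    · have h1 : eLpNorm W r μ = eLpNorm w r μ :=
        eLpNorm_congr_norm_ae (Eventually.of_forall fun x => by
          simp [hWdef, Complex.norm_real])
      have h2 : eLpNorm w r μ = eLpNorm (⇑f) (r * ENNReal.ofReal s) μ ^ s :=
        eLpNorm_norm_rpow (⇑f) hs0
      have h3 : r * ENNReal.ofReal s = p :=
        ENNReal.div_mul_cancel (by simpa using hs0) ENNReal.ofReal_ne_top
      rw [h1, h2, h3]
  have hWmem : MemLp W r μ :=
    ⟨hWmeas, by rw [hWnorm]; exact ENNReal.rpow_lt_top_of_nonneg hs hN_ne_top⟩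
  set p' : ℝ≥0∞ := (1/r + 1/p)⁻¹ with hp'def
  have hp'inv : 1/p' = 1/r + 1/p := by rw [hp'def, one_div, inv_inv]
  have hone : (1:ℝ≥0∞)/1 = 1/p + 1/p' := by
    rw [hp'inv, hrdef, one_div (p / ENNReal.ofReal s),
      ENNReal.inv_div (Or.inl ENNReal.ofReal_ne_top) (Or.inr hp0), hofs,
      ENNReal.div_add_div_same, ENNReal.div_add_div_same]
    have h : (p - 2) + 1 + 1 = p := by
      rw [add_assoc, one_add_one_eq_two]
      exact tsub_add_cancel_of_le hp
    rw [add_comm (1:ℝ≥0∞) ((p-2) + 1), h, ENNReal.div_self hp0 hp', one_div_one]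
  -- key integrability and bound
  have key : ∀ g h : X → ℂ, MemLp g p μ → MemLp h p μ →
      Integrable (fun x => g x * (starRingEnd ℂ) (h x) * W x) μ ∧
      eLpNorm (fun x => g x * (starRingEnd ℂ) (h x) * W x) 1 μ ≤
        eLpNorm g p μ * (eLpNorm W r μ * eLpNorm h p μ) := by
    intro g h hg hh
    have hch : MemLp (fun x => (starRingEnd ℂ) (h x)) p μ := by
      refine ⟨RCLike.continuous_conj.comp_aestronglyMeasurable hh.1, ?_⟩
      rw [eLpNorm_congr_norm_ae (Eventually.of_forall fun x => (RCLike.norm_conj (h x)))]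
      exact hh.2
    have hK : MemLp (W • fun x => (starRingEnd ℂ) (h x)) p' μ := hch.smul hWmem (hpqr := ⟨by simpa only [one_div] using hp'inv.symm⟩)
    have hG : MemLp (g • (W • fun x => (starRingEnd ℂ) (h x))) 1 μ := hK.smul hg (hpqr := ⟨by simpa only [one_div] using hone.symm⟩)
    have heq : (fun x => g x * (starRingEnd ℂ) (h x) * W x) =
        g • (W • fun x => (starRingEnd ℂ) (h x)) := by
      funext x
      simp only [Pi.smul_apply, smul_eq_mul, Pi.mul_apply]
      ring
    constructor
    · rw [heq]
      exact memLp_one_iff_integrable.mp hG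
    · rw [heq]
      calc eLpNorm (g • (W • fun x => (starRingEnd ℂ) (h x))) 1 μ
          ≤ eLpNorm g p μ * eLpNorm (W • fun x => (starRingEnd ℂ) (h x)) p' μ :=
            eLpNorm_smul_le_mul_eLpNorm hK.1 hg.1 (hpqr := ⟨by simpa only [one_div] using hone.symm⟩)
        _ ≤ eLpNorm g p μ * (eLpNorm W r μ * eLpNorm (fun x => (starRingEnd ℂ) (h x)) p μ) :=
            mul_le_mul_right (eLpNorm_smul_le_mul_eLpNorm hch.1 hWmeas (hpqr := ⟨by simpa only [one_div] using hp'inv.symm⟩)) _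
        _ = eLpNorm g p μ * (eLpNorm W r μ * eLpNorm h p μ) := by
            rw [eLpNorm_congr_norm_ae (Eventually.of_forall fun x => (RCLike.norm_conj (h x)))]
  -- the bound in real numbers
  have hbound : ∀ g h : Lp ℂ p μ,
      ‖((c : ℝ) : ℂ) * ∫ x, g x * (starRingEnd ℂ) (h x) * W x ∂μ‖ ≤ ‖g‖ * ‖h‖ := by
    intro g h
    obtain ⟨hint, hle⟩ := key (⇑g) (⇑h) (Lp.memLp g) (Lp.memLp h)
    have h1 : ‖((c : ℝ) : ℂ) * ∫ x, g x * (starRingEnd ℂ) (h x) * W x ∂μ‖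
        = c * ‖∫ x, g x * (starRingEnd ℂ) (h x) * W x ∂μ‖ := by
      rw [norm_mul, Complex.norm_real, Real.norm_eq_abs, _root_.abs_of_nonneg hc]
    rw [h1]
    have h2 : ‖∫ x, g x * (starRingEnd ℂ) (h x) * W x ∂μ‖ ≤ ‖g‖ * (‖f‖ ^ s * ‖h‖) := by
      calc ‖∫ x, g x * (starRingEnd ℂ) (h x) * W x ∂μ‖
          ≤ ∫ x, ‖g x * (starRingEnd ℂ) (h x) * W x‖ ∂μ := norm_integral_le_integral_norm _
        _ = (eLpNorm (fun x => g x * (starRingEnd ℂ) (h x) * W x) 1 μ).toReal := by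
            rw [integral_norm_eq_lintegral_enorm hint.1, eLpNorm_one_eq_lintegral_enorm]
        _ ≤ (eLpNorm (⇑g) p μ * (eLpNorm W r μ * eLpNorm (⇑h) p μ)).toReal := by
            refine ENNReal.toReal_mono ?_ hle
            exact ENNReal.mul_ne_top (Lp.eLpNorm_ne_top g)
              (ENNReal.mul_ne_top (by rw [hWnorm]; exact
                (ENNReal.rpow_lt_top_of_nonneg hs hN_ne_top).ne) (Lp.eLpNorm_ne_top h))
        _ = ‖g‖ * (‖f‖ ^ s * ‖h‖) := by
            rw [ENNReal.toReal_mul, ENNReal.toReal_mul, hWnorm, ← ENNReal.toReal_rpow,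
              ← Lp.norm_def, ← Lp.norm_def, ← Lp.norm_def]
    have h3 : c * (‖g‖ * (‖f‖ ^ s * ‖h‖)) = ‖g‖ * ‖h‖ := by
      have hcs : c * ‖f‖ ^ s = 1 := by
        rw [hcdef, ← Real.rpow_add hnorm_pos]
        have h4 : (2 - q) + s = 0 := by rw [hsdef]; ring
        rw [h4, Real.rpow_zero]
      calc c * (‖g‖ * (‖f‖ ^ s * ‖h‖)) = (c * ‖f‖ ^ s) * (‖g‖ * ‖h‖) := by ring
        _ = ‖g‖ * ‖h‖ := by rw [hcs, one_mul]
    calc c * ‖∫ x, g x * (starRingEnd ℂ) (h x) * W x ∂μ‖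
        ≤ c * (‖g‖ * (‖f‖ ^ s * ‖h‖)) := mul_le_mul_of_nonneg_left h2 hc
      _ = ‖g‖ * ‖h‖ := h3
  show IsSform μ p
      (fun g h : Lp ℂ p μ =>
        ((c : ℝ) : ℂ) * ∫ x, g x * (starRingEnd ℂ) (h x) * W x ∂μ) ∧
    ((c : ℝ) : ℂ) * (∫ x, f x * (starRingEnd ℂ) (f x) * W x ∂μ) = ((‖f‖ ^ 2 : ℝ) : ℂ)
  refine ⟨⟨?_, ?_, ?_, ?_, ?_, ?_, ?_⟩, ?_⟩
  · -- additivity in first argument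
    intro g₁ g₂ h
    beta_reduce
    have e1 : ∫ x, (↑(g₁ + g₂) : X → ℂ) x * (starRingEnd ℂ) (h x) * W x ∂μ =
        ∫ x, (g₁ x * (starRingEnd ℂ) (h x) * W x + g₂ x * (starRingEnd ℂ) (h x) * W x) ∂μ := by
      refine integral_congr_ae ?_
      filter_upwards [Lp.coeFn_add g₁ g₂] with x hx
      rw [hx]
      simp only [Pi.add_apply]
      ring
    rw [e1, integral_add (key _ _ (Lp.memLp g₁) (Lp.memLp h)).1
      (key _ _ (Lp.memLp g₂) (Lp.memLp h)).1, mul_add]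
  · -- homogeneity in first argument
    intro a g h
    beta_reduce
    have e1 : ∫ x, (↑(a • g) : X → ℂ) x * (starRingEnd ℂ) (h x) * W x ∂μ =
        ∫ x, a • (g x * (starRingEnd ℂ) (h x) * W x) ∂μ := by
      refine integral_congr_ae ?_
      filter_upwards [Lp.coeFn_smul a g] with x hx
      rw [hx]
      simp only [Pi.smul_apply, smul_eq_mul]
      ring
    rw [e1, integral_smul, smul_eq_mul]
    ring
  · -- additivity in second argument
    intro g h₁ h₂
    beta_reduce
    have e1 : ∫ x, g x * (starRingEnd ℂ) ((↑(h₁ + h₂) : X → ℂ) x) * W x ∂μ =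
        ∫ x, (g x * (starRingEnd ℂ) (h₁ x) * W x + g x * (starRingEnd ℂ) (h₂ x) * W x) ∂μ := by
      refine integral_congr_ae ?_
      filter_upwards [Lp.coeFn_add h₁ h₂] with x hx
      rw [hx]
      simp only [Pi.add_apply, map_add]
      ring
    rw [e1, integral_add (key _ _ (Lp.memLp g) (Lp.memLp h₁)).1
      (key _ _ (Lp.memLp g) (Lp.memLp h₂)).1, mul_add]
  · -- conjugate homogeneity in second argument
    intro a g h
    beta_reduce
    have e1 : ∫ x, g x * (starRingEnd ℂ) ((↑(a • h) : X → ℂ) x) * W x ∂μ =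
        ∫ x, (starRingEnd ℂ) a • (g x * (starRingEnd ℂ) (h x) * W x) ∂μ := by
      refine integral_congr_ae ?_
      filter_upwards [Lp.coeFn_smul a h] with x hx
      rw [hx]
      simp only [Pi.smul_apply, smul_eq_mul, map_mul]
      ring
    rw [e1, integral_smul, smul_eq_mul]
    ring
  · -- positivity
    intro g
    beta_reduce
    have e1 : ∫ x, g x * (starRingEnd ℂ) (g x) * W x ∂μ =
        ((∫ x, Complex.normSq (g x) * w x ∂μ : ℝ) : ℂ) := by
      rw [← my_integral_ofReal]
      refine integral_congr_ae (Eventually.of_forall fun x => ?_)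
      beta_reduce
      rw [Complex.mul_conj, hWdef, ← Complex.ofReal_mul]
    rw [e1, ← Complex.ofReal_mul]
    refine Complex.zero_le_real.mpr (mul_nonneg hc (integral_nonneg fun x => ?_))
    exact mul_nonneg (Complex.normSq_nonneg _) (Real.rpow_nonneg (norm_nonneg _) _)
  · -- invariance
    intro f' φ ψ φL ψL fφ fstarψ hφL hψL hfφ hfψ
    beta_reduce
    congr 1
    refine integral_congr_ae ?_
    filter_upwards [hφL, hψL, hfφ, hfψ] with x h1 h2 h3 h4
    rw [h1, h2, h3, h4]
    simp only [map_mul, Complex.conj_conj]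
    ring
  · -- bound
    exact hbound
  · -- value at (f, f)
    have e1 : ∫ x, f x * (starRingEnd ℂ) (f x) * W x ∂μ =
        ((∫ x, ‖(f : X → ℂ) x‖ ^ q ∂μ : ℝ) : ℂ) := by
      rw [← my_integral_ofReal]
      refine integral_congr_ae (Eventually.of_forall fun x => ?_)
      beta_reduce
      rw [Complex.mul_conj, hWdef, ← Complex.ofReal_mul]
      congr 1
      have hnsq : Complex.normSq ((f : X → ℂ) x) = ‖(f : X → ℂ) x‖ ^ (2:ℕ) := by
        rw [Complex.normSq_eq_norm_sq]
      rw [hnsq, hwdef]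
      have h5 : ‖(f : X → ℂ) x‖ ^ q = ‖(f : X → ℂ) x‖ ^ ((2:ℝ) + s) := by
        congr 1
        rw [hsdef]; ring
      rw [h5, Real.rpow_add' (norm_nonneg _) (by rw [hsdef]; simpa using hq0.ne'),
        Real.rpow_two]
    have hInn : 0 ≤ ∫ x, ‖(f : X → ℂ) x‖ ^ q ∂μ :=
      integral_nonneg fun x => Real.rpow_nonneg (norm_nonneg _) _
    have hI : ∫ x, ‖(f : X → ℂ) x‖ ^ q ∂μ = ‖f‖ ^ q := by
      have h := (Lp.memLp f).eLpNorm_eq_integral_rpow_norm hp0 hp'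
      have hnf : ‖f‖ = (∫ x, ‖(f : X → ℂ) x‖ ^ q ∂μ) ^ q⁻¹ := by
        rw [Lp.norm_def, h, ENNReal.toReal_ofReal (Real.rpow_nonneg hInn _)]
      rw [hnf, ← Real.rpow_mul hInn, inv_mul_cancel₀ hq0.ne', Real.rpow_one]
    rw [e1, hI, ← Complex.ofReal_mul]
    congr 1
    rw [hcdef, ← Real.rpow_add hnorm_pos]
    have h6 : (2 - q) + q = (2:ℝ) := by ring
    rw [h6, Real.rpow_two]


/-- For `p ≥ 2`, every `f ∈ L^p(X,μ)` admits a form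
`Ω ∈ S(L^p(X,μ))` with `Ω(f,f) = ‖f‖_p²`; explicitly, for `f ≠ 0` the form
`Ω(g,h) = ‖f‖_p^{2-p} ∫ g h̄ |f|^{p-2} dμ` belongs to `S(L^p(X,μ))` and
satisfies `Ω(f,f) = ‖f‖_p²`. -/
theorem sform_attaining_norm
    {X : Type*} [MeasurableSpace X] [TopologicalSpace X] [CompactSpace X]
    [T2Space X] [BorelSpace X] (μ : Measure X) [IsFiniteMeasure μ]
    (p : ℝ≥0∞) (hp : 2 ≤ p) (hp' : p ≠ ∞) (f : Lp ℂ p μ) :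
    (∃ Ω : Lp ℂ p μ → Lp ℂ p μ → ℂ,
        IsSform μ p Ω ∧ Ω f f = ((‖f‖ ^ 2 : ℝ) : ℂ)) ∧
    (f ≠ 0 →
      IsSform μ p
        (fun g h : Lp ℂ p μ =>
          ((‖f‖ ^ (2 - p.toReal) : ℝ) : ℂ) *
            ∫ x, g x * (starRingEnd ℂ) (h x) *
              ((‖f x‖ ^ (p.toReal - 2) : ℝ) : ℂ) ∂μ) ∧
      ((‖f‖ ^ (2 - p.toReal) : ℝ) : ℂ) *
          ∫ x, f x * (starRingEnd ℂ) (f x) *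
            ((‖f x‖ ^ (p.toReal - 2) : ℝ) : ℂ) ∂μ = ((‖f‖ ^ 2 : ℝ) : ℂ)) := by
  haveI : Fact (1 ≤ p) := ⟨le_trans (by norm_num) hp⟩
  by_cases hf : f = 0
  · constructor
    · refine ⟨fun _ _ => 0,
        ⟨fun _ _ _ => by simp, fun _ _ _ => by simp, fun _ _ _ => by simp,
         fun _ _ _ => by simp, fun _ => le_refl (0 : ℂ),
         fun _ _ _ _ _ _ _ _ _ _ _ => rfl,
         fun g h => by simpa using mul_nonneg (norm_nonneg g) (norm_nonneg h)⟩, ?_⟩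
      simp [hf]
    · intro h; exact absurd hf h
  · obtain ⟨h1, h2⟩ := sform_aux μ hp hp' f hf
    exact ⟨⟨_, h1, h2⟩, fun _ => ⟨h1, h2⟩⟩
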